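/- Let q ≥ 2 be an integer and let G be the lamplighter group (⨁_{i∈ℤ} ℤ/qℤ) ⋊ ℤ, where the generator of ℤ acts by shifting the coordinates of the direct sum. Then G has deep pockets with respect to some finite generating set. -/

import Mathlib

/-- The multiplicative group structure on `AddAut K` (composition), as in the older Mathlib. -/
instance addAutGroupOld {A : Type*} [Add A] : Group (AddAut A) where
  mul g h := AddEquiv.trans h g
  one := AddEquiv.refl _
  inv := AddEquiv.symm
  mul_assoc _ _ _ := rfl
  one_mul _ := rfl
  mul_one _ := rfl
  inv_mul_cancel := AddEquiv.self_trans_symm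

/-- `AddAut K` as multiplicative automorphisms of `Multiplicative K`. -/
def addAutToMulAut {K : Type*} [AddCommGroup K] : AddAut K →* MulAut (Multiplicative K) where
  toFun e := AddEquiv.toMultiplicative e
  map_one' := rfl
  map_mul' _ _ := rfl

/-- The shift automorphism of `⨁_{i ∈ ℤ} ℤ/qℤ` (modelled as finitely supported
functions `ℤ →₀ ZMod q`), sending the lamp configuration `f` to `i ↦ f (i - 1)`. -/
def lampShift (q : ℕ) : AddAut (ℤ →₀ ZMod q) :=
  Finsupp.domCongr (Equiv.addRight (1 : ℤ))

/-- The lamplighter group `(⨁_{i ∈ ℤ} ℤ/qℤ) ⋊ ℤ`, the generator of `ℤ` acting by the shift. -/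
abbrev Lamplighter (q : ℕ) : Type :=
  Multiplicative (ℤ →₀ ZMod q) ⋊[addAutToMulAut.comp
    (zpowersHom (AddAut (ℤ →₀ ZMod q)) (lampShift q))] Multiplicative ℤ

/-- Word length with respect to a generating set `S` (inverses allowed). -/
noncomputable def wordLength {G : Type*} [Group G] (S : Set G) (g : G) : ℕ :=
  sInf {n | ∃ f : Fin n → G, (∀ i, f i ∈ S ∪ S⁻¹) ∧ (List.ofFn f).prod = g}

/-- `G` has deep pockets with respect to `S`: there are elements of arbitrarily
large depth, i.e. for each `d` an element `g` all of whose `≤ d`-neighbours stay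
in the ball of radius `|g|_S`. -/
def HasDeepPockets {G : Type*} [Group G] (S : Set G) : Prop :=
  ∀ d : ℕ, ∃ g : G, ∀ h : G, wordLength S g < wordLength S h → d ≤ wordLength S (g⁻¹ * h)

set_option linter.unusedSectionVars false

namespace Lamp

variable (q : ℕ)

abbrev Cfg := ℤ →₀ ZMod q

noncomputable def sh (k : ℤ) (f : Cfg q) : Cfg q := (lampShift q ^ k) f

lemma sh_apply (k : ℤ) (f : Cfg q) (i : ℤ) : sh q k f i = f (i - k) := by
  unfold sh
  induction k using Int.induction_on generalizing f i with
  | zero => show ((lampShift q ^ (0:ℤ)) f) i = f (i - 0); rw [zpow_zero, sub_zero]; rfl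
  | succ n ih =>
      rw [zpow_add_one]; show ((lampShift q ^ (n:ℤ)) (lampShift q f)) i = _; rw [ih]
      show f ((Equiv.addRight (1:ℤ)).symm (i - n)) = _
      show f (i - n - 1) = _
      congr 1; ring
  | pred n ih =>
      rw [zpow_sub_one]; show ((lampShift q ^ (-(n:ℤ))) ((lampShift q)⁻¹ f)) i = _; rw [ih]
      show f ((Equiv.addRight (1:ℤ)) (i - (-n))) = _
      show f (i - (-n) + 1) = _
      congr 1; ring

lemma sh_add (k : ℤ) (f g : Cfg q) : sh q k (f + g) = sh q k f + sh q k g :=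
  map_add _ _ _

@[simp] lemma sh_zero_apply (k : ℤ) : sh q k 0 = 0 := map_zero _

@[simp] lemma sh_zero (f : Cfg q) : sh q 0 f = f := by ext i; rw [sh_apply]; simp

lemma sh_single (k i : ℤ) (v : ZMod q) :
    sh q k (Finsupp.single i v) = Finsupp.single (i + k) v := by
  ext j
  rw [sh_apply, Finsupp.single_apply, Finsupp.single_apply]
  by_cases h : i = j - k
  · simp [h, (by omega : i + k = j)]
  · rw [if_neg h, if_neg (by omega)]

lemma sh_support (k : ℤ) (f : Cfg q) :
    (sh q k f).support = f.support.map (Equiv.addRight k).toEmbedding := by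
  ext i
  simp only [Finsupp.mem_support_iff, Finset.mem_map, Equiv.coe_toEmbedding,
    Equiv.coe_addRight, sh_apply]
  constructor
  · intro h; exact ⟨i - k, h, by ring⟩
  · rintro ⟨j, hj, rfl⟩; simpa using hj

noncomputable def el (f : Cfg q) (k : ℤ) : Lamplighter q :=
  ⟨Multiplicative.ofAdd f, Multiplicative.ofAdd k⟩

lemma el_mul (f g : Cfg q) (k l : ℤ) :
    el q f k * el q g l = el q (f + sh q k g) (k + l) := by
  rfl

end Lamp

namespace Lamp

variable (q : ℕ) [NeZero q]

@[simp] lemma el_one : el q 0 0 = 1 := rfl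

lemma el_left (f : Cfg q) (k : ℤ) : Multiplicative.toAdd (el q f k).left = f := rfl
lemma el_right (f : Cfg q) (k : ℤ) : Multiplicative.toAdd (el q f k).right = k := rfl

lemma eq_el (x : Lamplighter q) :
    x = el q (Multiplicative.toAdd x.left) (Multiplicative.toAdd x.right) := rfl

noncomputable def tt : Lamplighter q := el q 0 1
noncomputable def aa (v : ZMod q) : Lamplighter q := el q (Finsupp.single 0 v) 0

lemma aa_zero : aa q 0 = 1 := by
  unfold aa; rw [Finsupp.single_zero]; rfl

lemma aa_mul (v w : ZMod q) : aa q v * aa q w = aa q (v + w) := by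
  unfold aa
  rw [el_mul, sh_zero, ← Finsupp.single_add, add_zero]

lemma aa_inv (v : ZMod q) : (aa q v)⁻¹ = aa q (-v) := by
  rw [eq_comm, eq_inv_iff_mul_eq_one, aa_mul]
  simp [aa_zero]

lemma tt_inv : (tt q)⁻¹ = el q 0 (-1) := by
  rw [eq_comm, eq_inv_iff_mul_eq_one]
  unfold tt
  rw [el_mul]
  simp

noncomputable def Sgen : Finset (Lamplighter q) :=
  letI := Classical.decEq (Lamplighter q)
  insert (tt q) (Finset.image (aa q) Finset.univ)

lemma tt_mem : tt q ∈ (Sgen q : Set (Lamplighter q)) := by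
  classical
  simp [Sgen]

lemma aa_mem (v : ZMod q) : aa q v ∈ (Sgen q : Set (Lamplighter q)) := by
  classical
  simp only [Sgen, Finset.coe_insert, Set.mem_insert_iff, Finset.coe_image]
  right
  exact ⟨v, by simp, rfl⟩

def IsLetter (x : Lamplighter q) : Prop :=
  x ∈ ((Sgen q : Set (Lamplighter q)) ∪ (Sgen q : Set (Lamplighter q))⁻¹)

lemma isLetter_tt : IsLetter q (tt q) := Or.inl (tt_mem q)
lemma isLetter_aa (v : ZMod q) : IsLetter q (aa q v) := Or.inl (aa_mem q v)
lemma isLetter_tinv : IsLetter q (el q 0 (-1)) := by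
  rw [← tt_inv]
  exact Or.inr (Set.inv_mem_inv.mpr (tt_mem q))

lemma isLetter_cases {x : Lamplighter q} (h : IsLetter q x) :
    x = tt q ∨ x = el q 0 (-1) ∨ ∃ v : ZMod q, x = aa q v := by
  classical
  rcases h with h | h
  · simp only [Sgen, Finset.coe_insert, Set.mem_insert_iff, Finset.coe_image,
      Set.mem_image] at h
    rcases h with rfl | ⟨v, _, rfl⟩
    · exact Or.inl rfl
    · exact Or.inr (Or.inr ⟨v, rfl⟩)
  · rw [Set.mem_inv] at h
    simp only [Sgen, Finset.coe_insert, Set.mem_insert_iff, Finset.coe_image,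
      Set.mem_image] at h
    rcases h with h | ⟨v, _, hv⟩
    · right; left
      rw [← tt_inv, ← h]; simp
    · right; right
      exact ⟨-v, by rw [← aa_inv, hv, inv_inv]⟩

end Lamp

namespace Lamp

variable (q : ℕ) [NeZero q]

lemma mem_wordSet {G : Type*} [Group G] (S : Set G) (g : G) (n : ℕ) :
    (n ∈ {n | ∃ f : Fin n → G, (∀ i, f i ∈ S ∪ S⁻¹) ∧ (List.ofFn f).prod = g}) ↔
    ∃ l : List G, (∀ x ∈ l, x ∈ S ∪ S⁻¹) ∧ l.prod = g ∧ l.length = n := by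
  constructor
  · rintro ⟨f, hf, hp⟩
    exact ⟨List.ofFn f, by
      intro x hx
      rcases List.mem_ofFn.mp hx with ⟨i, rfl⟩
      exact hf i, hp, List.length_ofFn⟩
  · rintro ⟨l, hl, hp, rfl⟩
    exact ⟨l.get, fun i => hl _ (by exact l.get_mem i), by rw [List.ofFn_get]; exact hp⟩

lemma wordLength_le {G : Type*} [Group G] (S : Set G) (g : G) (l : List G)
    (hl : ∀ x ∈ l, x ∈ S ∪ S⁻¹) (hp : l.prod = g) : wordLength S g ≤ l.length :=
  Nat.sInf_le ((mem_wordSet S g l.length).mpr ⟨l, hl, hp, rfl⟩)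

/-- `Rep x b`: `x` is represented by a word of length at most `b`. -/
def Rep (x : Lamplighter q) (b : ℕ) : Prop :=
  ∃ l : List (Lamplighter q), (∀ y ∈ l, IsLetter q y) ∧ l.prod = x ∧ l.length ≤ b

lemma Rep.wordLength_le {x : Lamplighter q} {b : ℕ} (h : Rep q x b) :
    wordLength (Sgen q : Set (Lamplighter q)) x ≤ b := by
  rcases h with ⟨l, hl, hp, hb⟩
  exact le_trans (Lamp.wordLength_le _ x l hl hp) hb

lemma Rep.one : Rep q 1 0 := ⟨[], by simp, rfl, by simp⟩

lemma Rep.letter {x : Lamplighter q} (h : IsLetter q x) : Rep q x 1 :=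
  ⟨[x], by simpa using h, by simp, by simp⟩

lemma Rep.mul {x y : Lamplighter q} {b c : ℕ} (hx : Rep q x b) (hy : Rep q y c) :
    Rep q (x * y) (b + c) := by
  rcases hx with ⟨l1, h1, p1, n1⟩
  rcases hy with ⟨l2, h2, p2, n2⟩
  refine ⟨l1 ++ l2, ?_, by rw [List.prod_append, p1, p2], by
    rw [List.length_append]; omega⟩
  intro y hy
  rcases List.mem_append.mp hy with h | h
  · exact h1 y h
  · exact h2 y h

lemma Rep.mono {x : Lamplighter q} {b c : ℕ} (h : Rep q x b) (hbc : b ≤ c) :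
    Rep q x c := by
  rcases h with ⟨l, hl, hp, hb⟩
  exact ⟨l, hl, hp, le_trans hb hbc⟩

lemma Rep.aa (v : ZMod q) : Rep q (aa q v) (if v = 0 then 0 else 1) := by
  by_cases hv : v = 0
  · subst hv; rw [aa_zero, if_pos rfl]; exact Rep.one q
  · rw [if_neg hv]; exact Rep.letter q (isLetter_aa q v)

lemma rep_travel (k : ℤ) : Rep q (el q 0 k) k.natAbs := by
  induction k using Int.induction_on with
  | zero => exact Rep.one q
  | succ n ih =>
      have : el q 0 ((n : ℤ) + 1) = tt q * el q 0 n := by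
        rw [tt, el_mul]; simp [add_comm]
      rw [this]
      have := (Rep.letter q (isLetter_tt q)).mul q ih
      refine this.mono q ?_
      simp
      omega
  | pred n ih =>
      have : el q 0 (-(n : ℤ) - 1) = el q 0 (-1) * el q 0 (-n) := by
        rw [el_mul]; simp; ring_nf
      rw [this]
      have := (Rep.letter q (isLetter_tinv q)).mul q ih
      refine this.mono q ?_
      simp
      omega

end Lamp

namespace Lamp

variable (q : ℕ) [NeZero q]

/-- lamps at positions `0..n` with values `v 0..v n`. -/
noncomputable def Fr (v : ℕ → ZMod q) (n : ℕ) : Cfg q :=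
  ∑ j ∈ Finset.range (n + 1), Finsupp.single (j : ℤ) (v j)

/-- lamps at positions `-n..0` with values `v n..v 0`. -/
noncomputable def Fl (v : ℕ → ZMod q) (n : ℕ) : Cfg q :=
  ∑ j ∈ Finset.range (n + 1), Finsupp.single (-(j : ℤ)) (v j)

noncomputable def W (v : ℕ → ZMod q) (n : ℕ) : ℕ :=
  ∑ j ∈ Finset.range (n + 1), (if v j = 0 then 0 else 1)

lemma W_le (v : ℕ → ZMod q) (n : ℕ) : W q v n ≤ n + 1 := by
  calc W q v n ≤ ∑ _j ∈ Finset.range (n + 1), 1 := by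
        apply Finset.sum_le_sum; intro j _; split <;> omega
    _ = n + 1 := by simp

lemma W_succ (v : ℕ → ZMod q) (n : ℕ) :
    W q v (n + 1) = (if v 0 = 0 then 0 else 1) + W q (fun j => v (j + 1)) n := by
  unfold W
  rw [Finset.sum_range_succ' (fun j => if v j = 0 then 0 else 1) (n+1)]
  ring

lemma sh_sum (k : ℤ) {α : Type*} (s : Finset α) (f : α → Cfg q) :
    sh q k (∑ j ∈ s, f j) = ∑ j ∈ s, sh q k (f j) := by
  unfold sh
  exact map_sum (lampShift q ^ k) f s

lemma Fr_succ (v : ℕ → ZMod q) (n : ℕ) :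
    Fr q v (n + 1) = Finsupp.single 0 (v 0) + sh q 1 (Fr q (fun j => v (j + 1)) n) := by
  unfold Fr
  rw [Finset.sum_range_succ' (fun j => Finsupp.single (j : ℤ) (v j)) (n+1)]
  rw [sh_sum]
  simp only [sh_single]
  rw [add_comm]
  congr 1
  all_goals
    apply Finset.sum_congr rfl
    intro j _
    congr 1
    push_cast
    ring

lemma Fl_succ (v : ℕ → ZMod q) (n : ℕ) :
    Fl q v (n + 1) = Finsupp.single 0 (v 0) + sh q (-1) (Fl q (fun j => v (j + 1)) n) := by
  unfold Fl
  rw [Finset.sum_range_succ' (fun j => Finsupp.single (-(j : ℤ)) (v j)) (n+1)]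
  rw [sh_sum]
  simp only [sh_single]
  rw [add_comm]
  congr 1
  all_goals
    apply Finset.sum_congr rfl
    intro j _
    congr 1
    push_cast
    ring

lemma rep_sweepR (n : ℕ) : ∀ v : ℕ → ZMod q, Rep q (el q (Fr q v n) n) (n + W q v n) := by
  induction n with
  | zero =>
      intro v
      show Rep q (el q (Fr q v 0) 0) (0 + W q v 0)
      have h : Fr q v 0 = Finsupp.single 0 (v 0) := by unfold Fr; simp
      have h2 : el q (Fr q v 0) 0 = aa q (v 0) := by rw [h]; rfl
      rw [h2]
      refine (Rep.aa q (v 0)).mono q ?_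
      unfold W; simp
  | succ n ih =>
      intro v
      have hdec : el q (Fr q v (n+1)) (((n+1:ℕ)):ℤ)
          = aa q (v 0) * (tt q * el q (Fr q (fun j => v (j+1)) n) n) := by
        unfold aa tt
        rw [el_mul, el_mul, sh_zero, zero_add, ← Fr_succ]
        congr 1
        push_cast
        ring
      rw [hdec]
      have hr := (Rep.aa q (v 0)).mul q ((Rep.letter q (isLetter_tt q)).mul q (ih (fun j => v (j+1))))
      refine hr.mono q ?_
      rw [W_succ]
      omega

lemma rep_sweepL (n : ℕ) : ∀ v : ℕ → ZMod q, Rep q (el q (Fl q v n) (-n)) (n + W q v n) := by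
  induction n with
  | zero =>
      intro v
      show Rep q (el q (Fl q v 0) (-(0:ℤ))) (0 + W q v 0)
      have h : Fl q v 0 = Finsupp.single 0 (v 0) := by unfold Fl; simp
      have h2 : el q (Fl q v 0) (-(0:ℤ)) = aa q (v 0) := by rw [h]; unfold aa; norm_num
      rw [h2]
      refine (Rep.aa q (v 0)).mono q ?_
      unfold W; simp
  | succ n ih =>
      intro v
      have hdec : el q (Fl q v (n+1)) (-((n+1:ℕ):ℤ))
          = aa q (v 0) * (el q 0 (-1) * el q (Fl q (fun j => v (j+1)) n) (-n)) := by
        unfold aa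
        rw [el_mul, el_mul, sh_zero, zero_add, ← Fl_succ]
        congr 1
        push_cast
        ring
      rw [hdec]
      have hr := (Rep.aa q (v 0)).mul q ((Rep.letter q (isLetter_tinv q)).mul q (ih (fun j => v (j+1))))
      refine hr.mono q ?_
      rw [W_succ]
      omega

end Lamp

namespace Lamp

variable (q : ℕ) [NeZero q]

lemma Fr_apply (v : ℕ → ZMod q) (n : ℕ) (i : ℤ) :
    Fr q v n i = if 0 ≤ i ∧ i ≤ n then v i.toNat else 0 := by
  unfold Fr
  rw [Finsupp.finset_sum_apply]
  split
  · rename_i h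
    rw [Finset.sum_eq_single_of_mem i.toNat (Finset.mem_range.mpr (by omega))]
    · rw [Finsupp.single_apply, if_pos (by omega)]
    · intro k _ hk
      rw [Finsupp.single_apply, if_neg (by omega)]
  · rename_i h
    apply Finset.sum_eq_zero
    intro k hk
    rw [Finset.mem_range] at hk
    rw [Finsupp.single_apply, if_neg (by omega)]

lemma Fl_apply (v : ℕ → ZMod q) (n : ℕ) (i : ℤ) :
    Fl q v n i = if -(n:ℤ) ≤ i ∧ i ≤ 0 then v (-i).toNat else 0 := by
  unfold Fl
  rw [Finsupp.finset_sum_apply]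
  split
  · rename_i h
    rw [Finset.sum_eq_single_of_mem (-i).toNat (Finset.mem_range.mpr (by omega))]
    · rw [Finsupp.single_apply, if_pos (by omega)]
    · intro k _ hk
      rw [Finsupp.single_apply, if_neg (by omega)]
  · rename_i h
    apply Finset.sum_eq_zero
    intro k hk
    rw [Finset.mem_range] at hk
    rw [Finsupp.single_apply, if_neg (by omega)]

lemma W_le' (v : ℕ → ZMod q) (n : ℕ) (h0 : v 0 = 0) : W q v n ≤ n := by
  unfold W
  rw [Finset.sum_range_succ' (fun j => if v j = 0 then 0 else 1) n]
  rw [if_pos h0, add_zero]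
  calc (∑ i ∈ Finset.range n, if v (i+1) = 0 then 0 else 1)
      ≤ ∑ _i ∈ Finset.range n, 1 := by
        apply Finset.sum_le_sum; intro j _; split <;> omega
    _ = n := by simp

lemma el_congr {f g : Cfg q} {k l : ℤ} (h1 : f = g) (h2 : k = l) :
    el q f k = el q g l := by rw [h1, h2]

lemma rep_el (m M k : ℤ) (f : Cfg q) (hsupp : ∀ i, f i ≠ 0 → m ≤ i ∧ i ≤ M)
    (hm : m ≤ 0) (hM : 0 ≤ M) (hmk : m ≤ k) (hkM : k ≤ M) :
    Rep q (el q f k) (3 * (M - m).toNat + 1) := by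
  have hnm : (-m).toNat = -m := by omega
  have hMM : (M.toNat : ℤ) = M := by omega
  set nm : ℕ := (-m).toNat
  set M' : ℕ := M.toNat
  have htot : (M - m).toNat = M' + nm := by omega
  rcases le_or_gt 0 k with hk | hk
  · -- go left first, then right, then back to k
    have key : Fl q (fun j => f (-(j:ℤ))) nm + Fr q (fun i => if i = 0 then 0 else f (i:ℤ)) M'
        = f := by
      ext i
      rw [Finsupp.add_apply, Fl_apply, Fr_apply]
      rcases lt_trichotomy i 0 with hi | hi | hi
      · rw [if_neg (show ¬((0:ℤ) ≤ i ∧ i ≤ (M':ℤ)) by omega), add_zero]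
        by_cases him : m ≤ i
        · rw [if_pos (show -(nm:ℤ) ≤ i ∧ i ≤ 0 by omega)]
          show f (-(((-i).toNat : ℕ) : ℤ)) = f i
          congr 1
          omega
        · rw [if_neg (show ¬(-(nm:ℤ) ≤ i ∧ i ≤ 0) by omega)]
          by_contra hne
          have := hsupp i (Ne.symm hne)
          omega
      · subst hi
        rw [if_pos (show -(nm:ℤ) ≤ (0:ℤ) ∧ (0:ℤ) ≤ 0 by omega),
            if_pos (show (0:ℤ) ≤ (0:ℤ) ∧ (0:ℤ) ≤ (M':ℤ) by omega)]
        show f (-(((-(0:ℤ)).toNat : ℕ) : ℤ)) + (if (0:ℤ).toNat = 0 then 0 else f (((0:ℤ).toNat : ℕ) : ℤ)) = f 0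
        norm_num
      · rw [if_neg (show ¬(-(nm:ℤ) ≤ i ∧ i ≤ 0) by omega), zero_add]
        by_cases hiM : i ≤ M
        · rw [if_pos (show (0:ℤ) ≤ i ∧ i ≤ (M':ℤ) by omega)]
          show (if i.toNat = 0 then 0 else f ((i.toNat : ℕ) : ℤ)) = f i
          rw [if_neg (by omega)]
          congr 1
          omega
        · rw [if_neg (show ¬((0:ℤ) ≤ i ∧ i ≤ (M':ℤ)) by omega)]
          by_contra hne
          have := hsupp i (Ne.symm hne)
          omega
    have hprod : el q (Fl q (fun j => f (-(j:ℤ))) nm) (-(nm:ℤ)) * el q 0 (nm:ℤ)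
        * el q (Fr q (fun i => if i = 0 then 0 else f (i:ℤ)) M') (M':ℤ)
        * el q 0 (k - M) = el q f k := by
      rw [el_mul, el_mul, el_mul, sh_zero_apply, add_zero]
      rw [show (-(nm:ℤ) + nm) = 0 by ring, sh_zero, sh_zero_apply, add_zero]
      exact el_congr q key (by omega)
    rw [← hprod]
    have r1 := rep_sweepL q nm (fun j => f (-(j:ℤ)))
    have r2 := rep_travel q (nm:ℤ)
    have r3 := rep_sweepR q M' (fun i => if i = 0 then 0 else f (i:ℤ))
    have r4 := rep_travel q (k - M)
    have hr := ((r1.mul q r2).mul q r3).mul q r4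
    refine hr.mono q ?_
    have w1 := W_le q (fun j => f (-(j:ℤ))) nm
    have w2 := W_le' q (fun i : ℕ => if i = 0 then 0 else f (i:ℤ)) M' (by norm_num)
    have h4 : (k - M).natAbs ≤ M' := by omega
    have h2 : (nm:ℤ).natAbs = nm := by omega
    omega
  · -- go right first, then left, then back to k
    have key : Fr q (fun j => f (j:ℤ)) M' + Fl q (fun j => if j = 0 then 0 else f (-(j:ℤ))) nm
        = f := by
      ext i
      rw [Finsupp.add_apply, Fr_apply, Fl_apply]
      rcases lt_trichotomy i 0 with hi | hi | hi
      · rw [if_neg (show ¬((0:ℤ) ≤ i ∧ i ≤ (M':ℤ)) by omega), zero_add]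
        by_cases him : m ≤ i
        · rw [if_pos (show -(nm:ℤ) ≤ i ∧ i ≤ 0 by omega)]
          show (if (-i).toNat = 0 then 0 else f (-(((-i).toNat : ℕ) : ℤ))) = f i
          rw [if_neg (by omega)]
          congr 1
          omega
        · rw [if_neg (show ¬(-(nm:ℤ) ≤ i ∧ i ≤ 0) by omega)]
          by_contra hne
          have := hsupp i (Ne.symm hne)
          omega
      · subst hi
        rw [if_pos (show (0:ℤ) ≤ (0:ℤ) ∧ (0:ℤ) ≤ (M':ℤ) by omega),
            if_pos (show -(nm:ℤ) ≤ (0:ℤ) ∧ (0:ℤ) ≤ 0 by omega)]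
        show f (((0:ℤ).toNat : ℕ) : ℤ) + (if (-(0:ℤ)).toNat = 0 then 0 else f (-(((-(0:ℤ)).toNat : ℕ) : ℤ))) = f 0
        norm_num
      · rw [if_neg (show ¬(-(nm:ℤ) ≤ i ∧ i ≤ 0) by omega), add_zero]
        by_cases hiM : i ≤ M
        · rw [if_pos (show (0:ℤ) ≤ i ∧ i ≤ (M':ℤ) by omega)]
          show f ((i.toNat : ℕ) : ℤ) = f i
          congr 1
          omega
        · rw [if_neg (show ¬((0:ℤ) ≤ i ∧ i ≤ (M':ℤ)) by omega)]
          by_contra hne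
          have := hsupp i (Ne.symm hne)
          omega
    have hprod : el q (Fr q (fun j => f (j:ℤ)) M') (M':ℤ) * el q 0 (-(M':ℤ))
        * el q (Fl q (fun j => if j = 0 then 0 else f (-(j:ℤ))) nm) (-(nm:ℤ))
        * el q 0 (k - m) = el q f k := by
      rw [el_mul, el_mul, el_mul, sh_zero_apply, add_zero]
      rw [show ((M':ℤ) + -(M':ℤ)) = 0 by ring, sh_zero, sh_zero_apply, add_zero]
      exact el_congr q key (by omega)
    rw [← hprod]
    have r1 := rep_sweepR q M' (fun j => f (j:ℤ))
    have r2 := rep_travel q (-(M':ℤ))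
    have r3 := rep_sweepL q nm (fun j => if j = 0 then 0 else f (-(j:ℤ)))
    have r4 := rep_travel q (k - m)
    have hr := ((r1.mul q r2).mul q r3).mul q r4
    refine hr.mono q ?_
    have w1 := W_le q (fun j => f (j:ℤ)) M'
    have w2 := W_le' q (fun j : ℕ => if j = 0 then 0 else f (-(j:ℤ))) nm (by norm_num)
    have h4 : (k - m).natAbs ≤ nm := by omega
    have h2 : (-(M':ℤ)).natAbs = M' := by omega
    omega

end Lamp

namespace Lamp

variable (q : ℕ) [NeZero q]

def isT (x : Lamplighter q) : Bool := decide (Multiplicative.toAdd x.right ≠ 0)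

noncomputable def Dl (l : List (Lamplighter q)) : ℤ :=
  Multiplicative.toAdd (l.prod).right

noncomputable def Fll (l : List (Lamplighter q)) : Cfg q :=
  Multiplicative.toAdd (l.prod).left

@[simp] lemma Dl_nil : Dl q [] = 0 := rfl
@[simp] lemma Fll_nil : Fll q [] = 0 := rfl

lemma Dl_cons (x : Lamplighter q) (l : List (Lamplighter q)) :
    Dl q (x :: l) = Multiplicative.toAdd x.right + Dl q l := rfl

lemma Fll_cons (x : Lamplighter q) (l : List (Lamplighter q)) :
    Fll q (x :: l) = Multiplicative.toAdd x.left + sh q (Multiplicative.toAdd x.right) (Fll q l) := rfl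

lemma Dl_append (l1 l2 : List (Lamplighter q)) :
    Dl q (l1 ++ l2) = Dl q l1 + Dl q l2 := by
  unfold Dl
  rw [List.prod_append]
  rfl

-- letters: components of the three letter shapes
lemma tt_right : Multiplicative.toAdd (tt q).right = 1 := rfl
lemma tinv_right : Multiplicative.toAdd (el q 0 (-1)).right = -1 := rfl
lemma aa_right (v : ZMod q) : Multiplicative.toAdd (aa q v).right = 0 := rfl
lemma tt_left : Multiplicative.toAdd (tt q).left = 0 := rfl
lemma tinv_left : Multiplicative.toAdd (el q 0 (-1)).left = 0 := rfl
lemma aa_left (v : ZMod q) : Multiplicative.toAdd (aa q v).left = Finsupp.single 0 v := rfl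

lemma letter_bound {x : Lamplighter q} (h : IsLetter q x) :
    (Multiplicative.toAdd x.right).natAbs ≤ (if isT q x then 1 else 0) := by
  rcases isLetter_cases q h with rfl | rfl | ⟨v, rfl⟩
  · rw [tt_right]; simp [isT, tt_right]
  · rw [tinv_right]; simp [isT, tinv_right]
  · rw [aa_right]; simp

lemma isT_eq_false {x : Lamplighter q} (h : isT q x = false) :
    Multiplicative.toAdd x.right = 0 := by
  simpa [isT] using h

lemma take_step (l : List (Lamplighter q)) (j : ℕ) (hj : j < l.length) :
    Dl q (l.take (j+1)) = Dl q (l.take j) + Multiplicative.toAdd (l[j]).right ∧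
    (l.take (j+1)).countP (isT q) = (l.take j).countP (isT q) + (if isT q l[j] then 1 else 0) := by
  have h : l.take (j+1) = l.take j ++ [l[j]] := by
    rw [List.take_succ, List.getElem?_eq_getElem hj]
    rfl
  constructor
  · rw [h, Dl_append]
    simp [Dl]
  · rw [h, List.countP_append]
    simp [List.countP_cons]

lemma C1 (l : List (Lamplighter q)) (hl : ∀ x ∈ l, IsLetter q x) (i j : ℕ) (hij : i ≤ j) :
    (Dl q (l.take j) - Dl q (l.take i)).natAbs + (l.take i).countP (isT q)
      ≤ (l.take j).countP (isT q) := by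
  induction j, hij using Nat.le_induction with
  | base => omega
  | succ j hij ih =>
      rcases lt_or_ge j l.length with hj | hj
      · obtain ⟨h1, h2⟩ := take_step q l j hj
        have hb := letter_bound q (hl l[j] (List.getElem_mem hj))
        rw [h1, h2]
        split at hb <;> rename_i hsplit
        · rw [if_pos hsplit]; omega
        · rw [if_neg hsplit]; omega
      · have h1 : l.take (j+1) = l.take j := by
          rw [List.take_of_length_le hj, List.take_of_length_le (by omega)]
        rw [h1]
        exact ih

lemma countP_take_le (l : List (Lamplighter q)) (j : ℕ) :
    (l.take j).countP (isT q) ≤ l.countP (isT q) := by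
  conv_rhs => rw [← List.take_append_drop j l]
  rw [List.countP_append]
  omega

/-- Support claim: every lit lamp was visited by an `a`-letter. -/
lemma support_claim (l : List (Lamplighter q)) (hl : ∀ x ∈ l, IsLetter q x) (i : ℤ)
    (hi : Fll q l i ≠ 0) :
    ∃ j : ℕ, ∃ h : j < l.length, isT q l[j] = false ∧ Dl q (l.take j) = i := by
  induction l generalizing i with
  | nil => simp at hi
  | cons x l ih =>
      have hx := hl x List.mem_cons_self
      have hl' : ∀ y ∈ l, IsLetter q y := fun y hy => hl y (List.mem_cons_of_mem x hy)
      rcases isLetter_cases q hx with rfl | rfl | ⟨v, rfl⟩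
      · rw [Fll_cons, tt_left, tt_right, zero_add, sh_apply] at hi
        obtain ⟨j, hjl, hT, hD⟩ := ih hl' (i - 1) hi
        refine ⟨j + 1, by simpa using hjl, by simpa using hT, ?_⟩
        have : (tt q :: l).take (j+1) = tt q :: l.take j := rfl
        rw [this, Dl_cons, tt_right, hD]
        omega
      · rw [Fll_cons, tinv_left, tinv_right, zero_add, sh_apply] at hi
        obtain ⟨j, hjl, hT, hD⟩ := ih hl' (i - (-1)) hi
        refine ⟨j + 1, by simpa using hjl, by simpa using hT, ?_⟩
        have : (el q 0 (-1) :: l).take (j+1) = el q 0 (-1) :: l.take j := rfl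
        rw [this, Dl_cons, tinv_right, hD]
        omega
      · rw [Fll_cons, aa_left, aa_right, sh_zero, Finsupp.add_apply] at hi
        by_cases hi0 : i = 0
        · subst hi0
          exact ⟨0, by simp, by simp [isT, aa_right], by simp⟩
        · rw [Finsupp.single_apply, if_neg (by omega), zero_add] at hi
          obtain ⟨j, hjl, hT, hD⟩ := ih hl' i hi
          refine ⟨j + 1, by simpa using hjl, by simpa using hT, ?_⟩
          have : (aa q v :: l).take (j+1) = aa q v :: l.take j := rfl
          rw [this, Dl_cons, aa_right, hD]
          omega

/-- Count claim: number of lit lamps is at most the number of `a`-letters. -/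
lemma count_claim (l : List (Lamplighter q)) (hl : ∀ x ∈ l, IsLetter q x) :
    (Fll q l).support.card ≤ l.countP (fun x => !isT q x) := by
  induction l with
  | nil => simp
  | cons x l ih =>
      have hx := hl x List.mem_cons_self
      have hl' : ∀ y ∈ l, IsLetter q y := fun y hy => hl y (List.mem_cons_of_mem x hy)
      rw [List.countP_cons]
      rcases isLetter_cases q hx with rfl | rfl | ⟨v, rfl⟩
      · rw [Fll_cons, tt_left, tt_right, zero_add, sh_support, Finset.card_map]
        have : (!isT q (tt q)) = false := by simp [isT, tt_right]
        rw [this]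
        simpa using ih hl'
      · rw [Fll_cons, tinv_left, tinv_right, zero_add, sh_support, Finset.card_map]
        have : (!isT q (el q 0 (-1))) = false := by simp [isT, tinv_right]
        rw [this]
        simpa using ih hl'
      · rw [Fll_cons, aa_left, aa_right, sh_zero]
        have h1 : (Finsupp.single (0:ℤ) v + Fll q l).support
            ⊆ insert 0 (Fll q l).support := by
          intro i hi
          have := Finsupp.support_add hi
          rcases Finset.mem_union.mp this with h | h
          · have := Finsupp.support_single_subset h
            simp only [Finset.mem_singleton] at this
            simp [this]
          · exact Finset.mem_insert_of_mem h
        have h2 : (!isT q (aa q v)) = true := by simp [isT, aa_right]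
        rw [h2]
        calc (Finsupp.single (0:ℤ) v + Fll q l).support.card
            ≤ (insert (0:ℤ) (Fll q l).support).card := Finset.card_le_card h1
          _ ≤ (Fll q l).support.card + 1 := Finset.card_insert_le _ _
          _ ≤ l.countP (fun x => !isT q x) + 1 := by have := ih hl'; omega
          _ = _ := by simp

lemma travel_bound (l : List (Lamplighter q)) (hl : ∀ x ∈ l, IsLetter q x)
    (hD : Dl q l = 0) (j1 j2 : ℕ) (h1 : j1 ≤ l.length) (h2 : j2 ≤ l.length) :
    (Dl q (l.take j1)).natAbs + (Dl q (l.take j2) - Dl q (l.take j1)).natAbs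
      + (Dl q (l.take j2)).natAbs ≤ l.countP (isT q) := by
  have htake0 : Dl q (l.take 0) = 0 := rfl
  have htakeL : l.take l.length = l := List.take_length
  rcases le_or_gt j1 j2 with hj | hj
  · have c1 := C1 q l hl 0 j1 (by omega)
    have c2 := C1 q l hl j1 j2 hj
    have c3 := C1 q l hl j2 l.length h2
    rw [htake0] at c1
    rw [htakeL, hD] at c3
    omega
  · have c1 := C1 q l hl 0 j2 (by omega)
    have c2 := C1 q l hl j2 j1 (by omega)
    have c3 := C1 q l hl j1 l.length h1
    rw [htake0] at c1
    rw [htakeL, hD] at c3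
    omega

lemma small_supp (l : List (Lamplighter q)) (hl : ∀ x ∈ l, IsLetter q x) (i : ℤ)
    (hi : Fll q l i ≠ 0) : i.natAbs ≤ l.length := by
  obtain ⟨j, hjl, _, hD⟩ := support_claim q l hl i hi
  have c1 := C1 q l hl 0 j (by omega)
  have htake0 : Dl q (l.take 0) = 0 := rfl
  rw [htake0, hD] at c1
  have := countP_take_le q l j
  have := List.countP_le_length (p := isT q) (l := l)
  omega

lemma small_D (l : List (Lamplighter q)) (hl : ∀ x ∈ l, IsLetter q x) :
    (Dl q l).natAbs ≤ l.length := by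
  have c1 := C1 q l hl 0 l.length (by omega)
  have htake0 : Dl q (l.take 0) = 0 := rfl
  rw [htake0, List.take_length] at c1
  have := List.countP_le_length (p := isT q) (l := l)
  omega

end Lamp

namespace Lamp

variable (q : ℕ) [NeZero q]

noncomputable def Fn (n : ℕ) : Cfg q :=
  ∑ i ∈ Finset.Icc (-(n:ℤ)) (n:ℤ), Finsupp.single i 1

lemma Fn_apply (n : ℕ) (i : ℤ) :
    Fn q n i = if -(n:ℤ) ≤ i ∧ i ≤ n then 1 else 0 := by
  unfold Fn
  rw [Finsupp.finset_sum_apply]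
  split
  · rename_i h
    rw [Finset.sum_eq_single_of_mem i (Finset.mem_Icc.mpr (by omega))]
    · rw [Finsupp.single_apply, if_pos rfl]
    · intro k _ hk
      rw [Finsupp.single_apply, if_neg hk]
  · rename_i h
    apply Finset.sum_eq_zero
    intro k hk
    rw [Finset.mem_Icc] at hk
    rw [Finsupp.single_apply, if_neg (by omega)]

lemma one_ne_zero' (hq : 2 ≤ q) : (1 : ZMod q) ≠ 0 := by
  intro h
  have h2 : ((1:ℕ) : ZMod q) = 0 := by exact_mod_cast h
  rw [ZMod.natCast_eq_zero_iff] at h2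
  have := Nat.le_of_dvd (by norm_num) h2
  omega

lemma Fn_support (n : ℕ) (hq : 2 ≤ q) :
    (Fn q n).support = Finset.Icc (-(n:ℤ)) (n:ℤ) := by
  ext i
  rw [Finsupp.mem_support_iff, Fn_apply, Finset.mem_Icc]
  split
  · rename_i h
    constructor
    · intro _; exact h
    · intro _; exact one_ne_zero' q hq
  · rename_i h
    constructor
    · intro h0; exact absurd rfl h0
    · intro hx; exact absurd hx h

/-- the dead-end element: all lamps in `[-n, n]` lit, cursor at the origin -/
noncomputable def gEl (n : ℕ) : Lamplighter q := el q (Fn q n) 0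

/-- lower bound: any word representing `gEl n` has length at least `6n+1`. -/
lemma lower_bound (n : ℕ) (hq : 2 ≤ q) (l : List (Lamplighter q))
    (hl : ∀ x ∈ l, IsLetter q x) (hp : l.prod = gEl q n) :
    6 * n + 1 ≤ l.length := by
  have hF : Fll q l = Fn q n := by unfold Fll; rw [hp]; rfl
  have hD : Dl q l = 0 := by unfold Dl; rw [hp]; rfl
  -- lamp count
  have hcard : (Fn q n).support.card = 2 * n + 1 := by
    rw [Fn_support q n hq, Int.card_Icc]
    omega
  have hA : 2 * n + 1 ≤ l.countP (fun x => !isT q x) := by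
    have := count_claim q l hl
    rw [hF, hcard] at this
    exact this
  -- travel count
  have hpos : Fll q l (n:ℤ) ≠ 0 := by
    rw [hF, Fn_apply, if_pos (by omega)]
    exact one_ne_zero' q hq
  have hneg : Fll q l (-(n:ℤ)) ≠ 0 := by
    rw [hF, Fn_apply, if_pos (by omega)]
    exact one_ne_zero' q hq
  obtain ⟨j1, hj1, _, hD1⟩ := support_claim q l hl (n:ℤ) hpos
  obtain ⟨j2, hj2, _, hD2⟩ := support_claim q l hl (-(n:ℤ)) hneg
  have hT := travel_bound q l hl hD j1 j2 (by omega) (by omega)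
  rw [hD1, hD2] at hT
  have hT4 : 4 * n ≤ l.countP (isT q) := by omega
  have hsplit := l.length_eq_countP_add_countP (isT q)
  have hconv : l.countP (fun x => !isT q x) = l.countP (fun a => decide (¬ isT q a = true)) := by
    apply List.countP_congr
    intro a _
    cases isT q a <;> simp
  omega

/-- every element admits some representing word -/
lemma rep_any (x : Lamplighter q) : ∃ b : ℕ, Rep q x b := by
  set f : Cfg q := Multiplicative.toAdd x.left with hf
  set k : ℤ := Multiplicative.toAdd x.right with hkdef
  set B : ℕ := (f.support.sup (fun i => i.natAbs)) + k.natAbs with hB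
  have hx : x = el q f k := eq_el q x
  have hsupp : ∀ i, f i ≠ 0 → -(B:ℤ) ≤ i ∧ i ≤ (B:ℤ) := by
    intro i hi
    have hmem : i ∈ f.support := Finsupp.mem_support_iff.mpr hi
    have h2 : i.natAbs ≤ f.support.sup (fun i => i.natAbs) :=
      Finset.le_sup (f := fun i : ℤ => i.natAbs) hmem
    omega
  have hk1 : -(B:ℤ) ≤ k := by omega
  have hk2 : k ≤ (B:ℤ) := by omega
  rw [hx]
  exact ⟨_, rep_el q (-(B:ℤ)) (B:ℤ) k f hsupp (by omega) (by omega) hk1 hk2⟩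

lemma wordSet_nonempty (x : Lamplighter q) :
    {n | ∃ f : Fin n → Lamplighter q,
      (∀ i, f i ∈ (Sgen q : Set (Lamplighter q)) ∪ (Sgen q : Set (Lamplighter q))⁻¹) ∧
      (List.ofFn f).prod = x}.Nonempty := by
  obtain ⟨b, l, hl, hp, _⟩ := rep_any q x
  exact ⟨l.length, (mem_wordSet (Sgen q : Set (Lamplighter q)) x l.length).mpr ⟨l, hl, hp, rfl⟩⟩

lemma closure_top : Subgroup.closure (Sgen q : Set (Lamplighter q)) = ⊤ := by
  rw [eq_top_iff]
  intro x _
  obtain ⟨b, l, hl, hp, _⟩ := rep_any q x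
  rw [← hp]
  apply Subgroup.list_prod_mem
  intro y hy
  rcases hl y hy with h | h
  · exact Subgroup.subset_closure h
  · rw [Set.mem_inv] at h
    have := Subgroup.subset_closure h
    simpa using Subgroup.inv_mem _ this

end Lamp


/-- lamplighter groups have deep pockets with respect to some
finite generating set. -/
theorem stmt10 (q : ℕ) (hq : 2 ≤ q) :
    ∃ S : Finset (Lamplighter q),
      Subgroup.closure (S : Set (Lamplighter q)) = ⊤ ∧
      HasDeepPockets (S : Set (Lamplighter q)) := by
  haveI : NeZero q := ⟨by omega⟩
  refine ⟨Lamp.Sgen q, Lamp.closure_top q, ?_⟩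
  intro d
  refine ⟨Lamp.gEl q d, ?_⟩
  intro h hlt
  by_contra hcon
  push_neg at hcon
  -- extract an optimal word for g⁻¹ * h
  have hmem := Nat.sInf_mem (Lamp.wordSet_nonempty q ((Lamp.gEl q d)⁻¹ * h))
  rw [Lamp.mem_wordSet] at hmem
  obtain ⟨l, hl, hp, hlen⟩ := hmem
  have hlen' : l.length < d := by
    rw [hlen]
    exact lt_of_lt_of_le (lt_of_eq_of_lt rfl hcon) le_rfl
  clear hlen hcon
  revert hlt
  -- h = g * (g⁻¹ h) in normal form
  have hprodl : l.prod = Lamp.el q (Lamp.Fll q l) (Lamp.Dl q l) := Lamp.eq_el q l.prod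
  have hh : h = Lamp.el q (Lamp.Fn q d + Lamp.Fll q l) (Lamp.Dl q l) := by
    have h1 : h = Lamp.gEl q d * ((Lamp.gEl q d)⁻¹ * h) := by group
    rw [h1, ← hp, hprodl]
    unfold Lamp.gEl
    rw [Lamp.el_mul, Lamp.sh_zero, zero_add]
  -- upper bound for h
  have hDb := Lamp.small_D q l hl
  have hsupp' : ∀ i, (Lamp.Fn q d + Lamp.Fll q l) i ≠ 0 → -(d:ℤ) ≤ i ∧ i ≤ (d:ℤ) := by
    intro i hi
    rw [Finsupp.add_apply] at hi
    by_cases h1 : Lamp.Fn q d i = 0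
    · have h2 : Lamp.Fll q l i ≠ 0 := by
        intro h2; rw [h1, h2] at hi; exact hi (add_zero 0)
      have := Lamp.small_supp q l hl i h2
      omega
    · rw [Lamp.Fn_apply] at h1
      by_cases hc : -(d:ℤ) ≤ i ∧ i ≤ (d:ℤ)
      · exact hc
      · rw [if_neg hc] at h1; exact absurd rfl h1
  have hrep := Lamp.rep_el q (-(d:ℤ)) (d:ℤ) (Lamp.Dl q l) (Lamp.Fn q d + Lamp.Fll q l)
    hsupp' (by omega) (by omega) (by omega) (by omega)
  have hbound : 3 * ((d:ℤ) - -(d:ℤ)).toNat + 1 = 6 * d + 1 := by omega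
  rw [hbound] at hrep
  have hwlh : wordLength (Lamp.Sgen q : Set (Lamplighter q)) h ≤ 6 * d + 1 := by
    rw [hh]
    exact hrep.wordLength_le q
  -- lower bound for g
  have hwlg : 6 * d + 1 ≤ wordLength (Lamp.Sgen q : Set (Lamplighter q)) (Lamp.gEl q d) := by
    unfold wordLength
    apply le_csInf (Lamp.wordSet_nonempty q (Lamp.gEl q d))
    intro b hb
    rw [Lamp.mem_wordSet] at hb
    obtain ⟨l', hl', hp', hlen''⟩ := hb
    rw [← hlen'']
    exact Lamp.lower_bound q d hq l' hl' hp'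
  intro hlt
  exact (not_lt.mpr hwlg) (lt_of_lt_of_le hlt hwlh)
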